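/- (Equations (14)–(15): stationary point of the inter-UAV SIR.) Fix h > 0 and the transmitting UAV's horizontal position s, and assume a := X − s > 0. Set Φ = (h² + Y² + a²)/a. Then on d > 0 the derivative of the map d ↦ SIR_link(s,d,h) is nonnegative if d ≥ Φ and strictly negative if 0 < d < Φ; in particular the derivative vanishes at d = Φ. -/

import Mathlib

/-- SIR at the receiving UAV of an inter-UAV hop: transmitting UAV at horizontal
position s, receiving UAV at horizontal position s + d, common altitude h. -/
noncomputable def SIRlink (pu pM μL ηN X Y s d h : ℝ) : ℝ :=
  pu * ηN * ((X - s - d) ^ 2 + Y ^ 2 + h ^ 2) / (pM * μL * d ^ 2)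

lemma deriv_SIRlink (X Y pu pM μL ηN h s : ℝ)
    (hpM : 0 < pM) (hμL : 0 < μL) (d : ℝ) (hd : 0 < d) :
    deriv (fun t => SIRlink pu pM μL ηN X Y s t h) d
      = 2 * pu * ηN * ((X - s) * d - ((X - s) ^ 2 + Y ^ 2 + h ^ 2))
        / (pM * μL * d ^ 3) := by
  have h1 : HasDerivAt (fun t : ℝ => X - s - t) (-1) d := by
    simpa using (hasDerivAt_id d).const_sub (X - s)
  have h2 : HasDerivAt (fun t : ℝ => (X - s - t) ^ 2 + Y ^ 2 + h ^ 2)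
      (2 * (X - s - d) ^ 1 * (-1)) d := ((h1.pow 2).add_const (Y ^ 2)).add_const (h ^ 2)
  have hN : HasDerivAt (fun t : ℝ => pu * ηN * ((X - s - t) ^ 2 + Y ^ 2 + h ^ 2))
      (pu * ηN * (2 * (X - s - d) ^ 1 * (-1))) d := h2.const_mul _
  have hD : HasDerivAt (fun t : ℝ => pM * μL * t ^ 2) (pM * μL * (2 * d ^ 1)) d :=
    (hasDerivAt_pow 2 d).const_mul _
  have hne : pM * μL * d ^ 2 ≠ 0 := by positivity
  have := (hN.div hD hne).deriv
  simp only [Pi.div_def] at this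
  rw [show (fun t => SIRlink pu pM μL ηN X Y s t h)
      = fun t : ℝ => pu * ηN * ((X - s - t) ^ 2 + Y ^ 2 + h ^ 2) / (pM * μL * t ^ 2)
      from rfl, this]
  have hd3 : pM * μL * d ^ 3 ≠ 0 := by positivity
  field_simp
  ring

theorem stmt19 (X Y pu pM μL ηN h s : ℝ)
    (hpu : 0 < pu) (hpM : 0 < pM) (hμL : 0 < μL) (hηN : 0 < ηN)
    (hh : 0 < h) (ha : 0 < X - s) :
    (∀ d : ℝ, 0 < d →
      (d ≥ (h ^ 2 + Y ^ 2 + (X - s) ^ 2) / (X - s) →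
        0 ≤ deriv (fun t => SIRlink pu pM μL ηN X Y s t h) d) ∧
      (d < (h ^ 2 + Y ^ 2 + (X - s) ^ 2) / (X - s) →
        deriv (fun t => SIRlink pu pM μL ηN X Y s t h) d < 0)) ∧
    deriv (fun t => SIRlink pu pM μL ηN X Y s t h)
      ((h ^ 2 + Y ^ 2 + (X - s) ^ 2) / (X - s)) = 0 := by
  have hK : 0 < h ^ 2 + Y ^ 2 + (X - s) ^ 2 := by positivity
  constructor
  · intro d hd
    rw [deriv_SIRlink X Y pu pM μL ηN h s hpM hμL d hd]
    constructor
    · intro hge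
      have : (h ^ 2 + Y ^ 2 + (X - s) ^ 2) ≤ (X - s) * d := by
        rw [ge_iff_le, div_le_iff₀ ha] at hge
        nlinarith
      apply div_nonneg _ (by positivity)
      nlinarith [mul_nonneg (mul_pos hpu hηN).le
        (by linarith : (0:ℝ) ≤ (X - s) * d - ((X - s) ^ 2 + Y ^ 2 + h ^ 2))]
    · intro hlt
      have : (X - s) * d < h ^ 2 + Y ^ 2 + (X - s) ^ 2 := by
        rw [lt_div_iff₀ ha] at hlt
        nlinarith
      apply div_neg_of_neg_of_pos _ (by positivity)
      nlinarith [mul_pos (mul_pos hpu hηN)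
        (by linarith : (0:ℝ) < ((X - s) ^ 2 + Y ^ 2 + h ^ 2) - (X - s) * d)]
  · have hΦ : 0 < (h ^ 2 + Y ^ 2 + (X - s) ^ 2) / (X - s) := by positivity
    rw [deriv_SIRlink X Y pu pM μL ηN h s hpM hμL _ hΦ]
    have : (X - s) * ((h ^ 2 + Y ^ 2 + (X - s) ^ 2) / (X - s))
        - ((X - s) ^ 2 + Y ^ 2 + h ^ 2) = 0 := by
      field_simp
      ring
    rw [this]
    simp
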